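/- arXiv:2405.21047 — 4 statements merged into one kernel-verified Lean document; each statement's English description precedes it below -/
import Mathlib

section
/- With P, L, Q, and c as above, the chain-rule product of the reweighted conditionals recovers Q exactly: for every w ∈ Σ^n with P(prefix) > 0 at every step, ∏_{i=1}^{n} [ P(w_i | w_{1:i-1}) · c(w_{1:i}) / Σ_{w'} P(w' | w_{1:i-1}) · c(w_{1:i-1} w') ] = Q(w). -/
open scoped BigOperators
open Finset Filter

namespace GAD

/-- Marginal probability of the prefix `u` under a distribution `P` on length-`n` strings. -/
noncomputable def marg {α : Type*} [Fintype α] (n : ℕ) (P : List α → ℝ) (u : List α) : ℝ :=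
  ∑ v : Fin (n - u.length) → α, P (u ++ List.ofFn v)

/-- Marginal probability mass of completions of `u` that land in the language `L`. -/
noncomputable def margL {α : Type*} [Fintype α] (n : ℕ) (P : List α → ℝ) (L : Set (List α))
    (u : List α) : ℝ :=
  ∑ v : Fin (n - u.length) → α, L.indicator P (u ++ List.ofFn v)

/-- Next-token conditional `P(a | u)`. -/
noncomputable def cond {α : Type*} [Fintype α] (n : ℕ) (P : List α → ℝ) (u : List α) (a : α) : ℝ :=
  marg n P (u ++ [a]) / marg n P u

/-- Expected future grammaticality `c(u) = Σ_v P(v | u) · 1[u ++ v ∈ L]`. -/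
noncomputable def efg {α : Type*} [Fintype α] (n : ℕ) (P : List α → ℝ) (L : Set (List α))
    (u : List α) : ℝ :=
  margL n P L u / marg n P u

/-- `u` is a prefix of some string of the language `L`. -/
def inPrefix {α : Type*} (L : Set (List α)) (u : List α) : Prop := ∃ v, u ++ v ∈ L

/-- Total probability mass of the language: `P(L)`. -/
noncomputable def PL {α : Type*} [Fintype α] (n : ℕ) (P : List α → ℝ) (L : Set (List α)) : ℝ :=
  margL n P L []

lemma sumSplit {α : Type*} [Fintype α] (f : List α → ℝ) (k : ℕ) (u : List α) :
    ∑ v : Fin (k+1) → α, f (u ++ List.ofFn v)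
      = ∑ a : α, ∑ v : Fin k → α, f ((u ++ [a]) ++ List.ofFn v) := by
  rw [← (Fin.consEquiv (fun _ : Fin (k+1) => α)).sum_comp
       (fun v => f (u ++ List.ofFn v))]
  rw [Fintype.sum_prod_type]
  simp [Fin.consEquiv, List.ofFn_succ]

lemma split {α : Type*} [Fintype α] (n : ℕ) (f : List α → ℝ) (u : List α) (hlen : u.length < n) :
    (∑ v : Fin (n - u.length) → α, f (u ++ List.ofFn v))
      = ∑ a : α, ∑ v : Fin (n - (u ++ [a]).length) → α, f ((u ++ [a]) ++ List.ofFn v) := by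
  have hk : n - u.length = (n - (u.length+1)) + 1 := by omega
  rw [hk, sumSplit]
  refine Finset.sum_congr rfl fun a _ => ?_
  have h2 : n - (u ++ [a]).length = n - (u.length + 1) := by simp
  rw [h2]

lemma margL_nonneg {α : Type*} [Fintype α] (n : ℕ) (P : List α → ℝ) (L : Set (List α))
    (hP : ∀ w, 0 ≤ P w) (u : List α) : 0 ≤ margL n P L u := by
  apply Finset.sum_nonneg
  intro v _
  by_cases h : (u ++ List.ofFn v) ∈ L <;> simp [Set.indicator, h, hP]

lemma margL_le_marg {α : Type*} [Fintype α] (n : ℕ) (P : List α → ℝ) (L : Set (List α))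
    (hP : ∀ w, 0 ≤ P w) (u : List α) : margL n P L u ≤ marg n P u := by
  apply Finset.sum_le_sum
  intro v _
  by_cases h : (u ++ List.ofFn v) ∈ L <;> simp [Set.indicator, h, hP]

lemma condEfg {α : Type*} [Fintype α] (n : ℕ) (P : List α → ℝ) (L : Set (List α))
    (hP : ∀ w, 0 ≤ P w) (u : List α) (a : α) (hu : marg n P u ≠ 0) :
    cond n P u a * efg n P L (u ++ [a]) = margL n P L (u ++ [a]) / marg n P u := by
  by_cases hm : marg n P (u ++ [a]) = 0
  · have h0 : margL n P L (u ++ [a]) = 0 :=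
      le_antisymm (hm ▸ margL_le_marg n P L hP (u ++ [a])) (margL_nonneg n P L hP (u ++ [a]))
    simp [cond, efg, hm, h0]
  · unfold cond efg
    field_simp

lemma sumCond {α : Type*} [Fintype α] (n : ℕ) (P : List α → ℝ) (L : Set (List α))
    (hP : ∀ w, 0 ≤ P w) (u : List α) (hlen : u.length < n) (hu : marg n P u ≠ 0) :
    ∑ a : α, cond n P u a * efg n P L (u ++ [a]) = margL n P L u / marg n P u := by
  rw [Finset.sum_congr rfl (fun a _ => condEfg n P L hP u a hu), ← Finset.sum_div]
  congr 1
  exact (split n _ u hlen).symm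

lemma telescope (g : ℕ → ℝ) : ∀ n : ℕ, g 0 ≠ 0 → (∀ i < n, g i ≠ 0) →
    ∏ i ∈ range n, g (i+1) / g i = g n / g 0 := by
  intro n
  induction n with
  | zero => intro h0 _; simp [div_self h0]
  | succ m ih =>
    intro h0 h
    rw [Finset.prod_range_succ, ih h0 (fun i hi => h i (by omega))]
    have hm : g m ≠ 0 := h m (by omega)
    field_simp

lemma divdiv (A B M : ℝ) (hM : M ≠ 0) : (A/M)/(B/M) = A/B := by
  rcases eq_or_ne B 0 with h|h
  · simp [h]
  · field_simp

/-- The chain-rule product of the `c`-reweighted conditionals recovers `Q` exactly: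
for every full string `w` whose prefixes all have positive `P`-marginal (and nonzero
normalizers), `∏_i P(w_i | w_{1:i-1})·c(w_{1:i}) / Σ_a P(a | w_{1:i-1})·c(w_{1:i-1}a) = Q(w)`. -/
theorem stmt1 {α : Type*} [Fintype α] (n : ℕ) (P : List α → ℝ) (L : Set (List α))
    (hP : ∀ w, 0 ≤ P w) (hPsum : ∑ w : Fin n → α, P (List.ofFn w) = 1)
    (hL : ∀ w ∈ L, w.length = n) (hPL : 0 < PL n P L)
    (w : Fin n → α)
    (hmarg : ∀ i : ℕ, i ≤ n → 0 < marg n P ((List.ofFn w).take i))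
    (hden : ∀ i : Fin n,
      (∑ a : α, cond n P ((List.ofFn w).take i) a * efg n P L ((List.ofFn w).take i ++ [a])) ≠ 0) :
    (∏ i : Fin n,
        cond n P ((List.ofFn w).take i) (w i) * efg n P L ((List.ofFn w).take i ++ [w i]) /
          ∑ a : α, cond n P ((List.ofFn w).take i) a * efg n P L ((List.ofFn w).take i ++ [a]))
      = L.indicator P (List.ofFn w) / PL n P L := by
  set W := List.ofFn w with hW
  have hlenW : W.length = n := by simp [hW]
  have hlen : ∀ i : ℕ, i ≤ n → (W.take i).length = i := by
    intro i hi; simp [hW]; omega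
  have htake : ∀ i : Fin n, W.take (i : ℕ) ++ [w i] = W.take ((i : ℕ)+1) := by
    intro i
    rw [List.take_succ]
    simp [hW, List.getElem?_ofFn, List.ofFnNthVal, i.isLt]
  set g : ℕ → ℝ := fun i => margL n P L (W.take i) with hg
  have hQ : ∀ i : Fin n,
      cond n P (W.take (i:ℕ)) (w i) * efg n P L (W.take (i:ℕ) ++ [w i]) /
        ∑ a : α, cond n P (W.take (i:ℕ)) a * efg n P L (W.take (i:ℕ) ++ [a])
      = g ((i:ℕ)+1) / g (i:ℕ) := by
    intro i
    have hm : marg n P (W.take (i:ℕ)) ≠ 0 := (hmarg i i.isLt.le).ne'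
    have hl : (W.take (i:ℕ)).length < n := by rw [hlen i i.isLt.le]; exact i.isLt
    rw [sumCond n P L hP _ hl hm, condEfg n P L hP _ _ hm, htake i]
    exact divdiv _ _ _ hm
  have h0 : g 0 ≠ 0 := by
    have : g 0 = PL n P L := by simp [hg, PL]
    rw [this]; exact hPL.ne'
  have hne : ∀ i < n, g i ≠ 0 := by
    intro i hi hzero
    have hm : marg n P (W.take i) ≠ 0 := (hmarg i hi.le).ne'
    have hl : (W.take i).length < n := by rw [hlen i hi.le]; exact hi
    apply hden ⟨i, hi⟩
    rw [sumCond n P L hP _ hl hm]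
    have : margL n P L (W.take i) = 0 := hzero
    simp [this]
  have hgn : g n = L.indicator P W := by
    have h1 : W.take n = W := List.take_of_length_le (le_of_eq hlenW)
    have h2 : margL n P L W = L.indicator P W := by
      unfold margL
      have h3 : n - W.length = 0 := by rw [hlenW]; omega
      simp [h3]
    rw [hg]; simp only [h1]; exact h2
  have step1 : (∏ i : Fin n,
        cond n P (W.take (i:ℕ)) (w i) * efg n P L (W.take (i:ℕ) ++ [w i]) /
          ∑ a : α, cond n P (W.take (i:ℕ)) a * efg n P L (W.take (i:ℕ) ++ [a]))
      = ∏ i : Fin n, g ((i:ℕ)+1) / g (i:ℕ) := Finset.prod_congr rfl fun i _ => hQ i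
  have step2 : (∏ i : Fin n, g ((i:ℕ)+1) / g (i:ℕ)) = ∏ i ∈ range n, g (i+1) / g i :=
    Fin.prod_univ_eq_prod_range (fun i => g (i+1) / g i) n
  rw [step1, step2, telescope g n h0 hne, hgn]
  have hg0 : g 0 = PL n P L := by simp [hg, PL]
  rw [hg0]


end GAD
end

section
/- Let S be a finite set of previously sampled strings in L ⊆ Σ^n. Define the ASAp approximation c̃_S by: c̃_S(w_{1:i}) = 1[w_{1:i} ∈ L_prefix] if no string in S has w_{1:i} as a prefix, and otherwise c̃_S(w_{1:i}) = Σ_{a ∈ Σ} P(a | w_{1:i}) · c̃_S(w_{1:i} a) (with c̃_S(w_{1:n}) = 1[w_{1:n} ∈ L] at full length). Then c̃_S(w_{1:i}) ≥ c(w_{1:i}) for every prefix w_{1:i}; i.e., the ASAp approximation soundly overapproximates the expected future grammaticality. -/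
open scoped BigOperators
open Finset Filter

namespace GAD

open Classical in
/-- ASAp approximation of expected future grammaticality, with fuel = remaining length. -/
noncomputable def ctildeAux {α : Type*} [Fintype α] (n : ℕ) (P : List α → ℝ) (L : Set (List α))
    (S : Finset (List α)) : ℕ → List α → ℝ
  | 0, u => Set.indicator L (fun _ => (1 : ℝ)) u
  | (k + 1), u =>
      if ∃ s ∈ S, u <+: s then
        ∑ a : α, cond n P u a * ctildeAux n P L S k (u ++ [a])
      else Set.indicator {t | inPrefix L t} (fun _ => (1 : ℝ)) u

/-- ASAp overapproximation `c̃_S`. -/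
noncomputable def ctilde {α : Type*} [Fintype α] (n : ℕ) (P : List α → ℝ) (L : Set (List α))
    (S : Finset (List α)) (u : List α) : ℝ :=
  ctildeAux n P L S (n - u.length) u

lemma sum_pi_succ {α : Type*} [Fintype α] (m : ℕ) (Q : List α → ℝ) (u : List α) :
    ∑ v : Fin (m + 1) → α, Q (u ++ List.ofFn v)
      = ∑ a : α, ∑ v : Fin m → α, Q ((u ++ [a]) ++ List.ofFn v) := by
  rw [← (Fin.consEquiv (fun _ : Fin (m+1) => α)).sum_comp, Fintype.sum_prod_type]
  refine Finset.sum_congr rfl fun a _ => Finset.sum_congr rfl fun v _ => ?_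
  congr 1
  simp [Fin.consEquiv, List.ofFn_succ, Fin.cons]

lemma marg_succ {α : Type*} [Fintype α] (n : ℕ) (P : List α → ℝ) (u : List α)
    (h : u.length < n) : marg n P u = ∑ a : α, marg n P (u ++ [a]) := by
  have hm : n - u.length = (n - (u.length + 1)) + 1 := by omega
  unfold marg
  rw [hm, sum_pi_succ]
  refine Finset.sum_congr rfl fun a _ => ?_
  have : n - (u ++ [a]).length = n - (u.length + 1) := by simp
  rw [this]

lemma margL_succ {α : Type*} [Fintype α] (n : ℕ) (P : List α → ℝ) (L : Set (List α)) (u : List α)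
    (h : u.length < n) : margL n P L u = ∑ a : α, margL n P L (u ++ [a]) := by
  have hm : n - u.length = (n - (u.length + 1)) + 1 := by omega
  unfold margL
  rw [hm, sum_pi_succ]
  refine Finset.sum_congr rfl fun a _ => ?_
  have : n - (u ++ [a]).length = n - (u.length + 1) := by simp
  rw [this]

/-- The ASAp approximation soundly overapproximates the expected future
grammaticality: `c̃_S(u) ≥ c(u)` for every prefix `u`. -/
theorem stmt5 {α : Type*} [Fintype α] (n : ℕ) (P : List α → ℝ) (L : Set (List α))
    (hP : ∀ w, 0 ≤ P w) (hL : ∀ w ∈ L, w.length = n)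
    (S : Finset (List α)) (hS : ↑S ⊆ L)
    (hmarg : ∀ u : List α, u.length ≤ n → 0 < marg n P u) :
    ∀ u : List α, u.length ≤ n → efg n P L u ≤ ctilde n P L S u := by
  suffices h : ∀ k (u : List α), u.length + k = n → efg n P L u ≤ ctildeAux n P L S k u by
    intro u hu
    have := h (n - u.length) u (by omega)
    simpa [ctilde] using this
  intro k
  induction k with
  | zero =>
    intro u hu
    simp only [ctildeAux]
    have hlen : u.length ≤ n := by omega
    by_cases huL : u ∈ L
    · rw [Set.indicator_of_mem huL]
      exact div_le_one_of_le₀ (margL_le_marg n P L hP u) (le_of_lt (hmarg u hlen))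
    · rw [Set.indicator_of_notMem huL]
      have h0 : margL n P L u = 0 := by
        have hm : n - u.length = 0 := by omega
        unfold margL
        rw [hm]
        apply Finset.sum_eq_zero
        intro v _
        have : u ++ List.ofFn v = u := by simp
        rw [this, Set.indicator_of_notMem huL]
      rw [efg, h0, zero_div]
  | succ k ih =>
    intro u hu
    have hlt : u.length < n := by omega
    simp only [ctildeAux]
    split_ifs with hcond
    · have hdecomp : efg n P L u = ∑ a : α, cond n P u a * efg n P L (u ++ [a]) := by
        rw [efg, margL_succ n P L u hlt, Finset.sum_div]
        refine Finset.sum_congr rfl fun a _ => ?_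
        have hpos : marg n P (u ++ [a]) ≠ 0 := by
          refine ne_of_gt (hmarg (u ++ [a]) ?_)
          simp; omega
        rw [cond, efg]
        field_simp
      rw [hdecomp]
      refine Finset.sum_le_sum fun a _ => ?_
      have hc : 0 ≤ cond n P u a := by
        apply div_nonneg
        · exact le_of_lt (hmarg (u ++ [a]) (by simp; omega))
        · exact le_of_lt (hmarg u (le_of_lt hlt))
      refine mul_le_mul_of_nonneg_left ?_ hc
      exact ih (u ++ [a]) (by simp; omega)
    · by_cases hpre : inPrefix L u
      · rw [Set.indicator_of_mem (by exact hpre)]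
        exact div_le_one_of_le₀ (margL_le_marg n P L hP u) (le_of_lt (hmarg u (le_of_lt hlt)))
      · rw [Set.indicator_of_notMem (by exact hpre)]
        have h0 : margL n P L u = 0 := by
          unfold margL
          apply Finset.sum_eq_zero
          intro v _
          rw [Set.indicator_of_notMem]
          intro hmem
          exact hpre ⟨List.ofFn v, hmem⟩
        rw [efg, h0, zero_div]

end GAD
end

section
/- GCD is biased in general: there exists a finite alphabet Σ, a pmf P over Σ^n satisfying autoregressive factorization, and a language L ⊆ Σ^n, such that the GCD distribution Q̃_GCD differs from the grammar-aligned distribution Q = P(· | L). Concretely, with Σ = {0,1}, n = 5, P the product of i.i.d. Bernoulli(1/2) bits, and L = {00000} ∪ {1 b2 b3 b4 b5 : b_i ∈ {0,1}}, we have Q̃_GCD(00000) = 1/2 while Q(00000) = 1/17. -/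
open scoped BigOperators
open Finset Filter

namespace GAD

/-- The GCD sampling distribution: conditionals reweighted by the prefix-language indicator. -/
noncomputable def QGCD {α : Type*} [Fintype α] (n : ℕ) (P : List α → ℝ) (L : Set (List α))
    (w : Fin n → α) : ℝ :=
  ∏ i : Fin n,
    cond n P ((List.ofFn w).take i) (w i) *
        Set.indicator {t | inPrefix L t} (fun _ => (1 : ℝ)) ((List.ofFn w).take i ++ [w i]) /
      ∑ a : α, cond n P ((List.ofFn w).take i) a *
        Set.indicator {t | inPrefix L t} (fun _ => (1 : ℝ)) ((List.ofFn w).take i ++ [a])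

/-- Uniform (i.i.d. Bernoulli(1/2)) distribution on binary strings of length 5. -/
noncomputable def P10 : List Bool → ℝ := fun w => if w.length = 5 then (1 : ℝ) / 32 else 0

/-- The language `{00000} ∪ 1·{0,1}⁴` (false = 0, true = 1). -/
def L10 : Set (List Bool) :=
  {w | w = [false, false, false, false, false] ∨ (w.length = 5 ∧ w.head? = some true)}

instance decMemL10 : DecidablePred (· ∈ L10) := fun w =>
  decidable_of_iff (w = [false, false, false, false, false] ∨
    (w.length = 5 ∧ w.head? = some true)) Iff.rfl

lemma marg_eq (u : List Bool) (h : u.length ≤ 5) :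
    marg 5 P10 u = 2 ^ (5 - u.length) / 32 := by
  unfold marg P10
  have h5 : ∀ v : Fin (5 - u.length) → Bool, (u ++ List.ofFn v).length = 5 := by
    intro v; simp [List.length_append]; omega
  simp only [h5, if_pos]
  rw [Finset.sum_const]
  simp [Finset.card_univ, div_eq_mul_inv]

lemma cond_eq (u : List Bool) (a : Bool) (h : u.length < 5) :
    cond 5 P10 u a = 1 / 2 := by
  rw [cond, marg_eq _ (by simp [List.length_append]; omega), marg_eq u (le_of_lt h)]
  simp only [List.length_append, List.length_cons, List.length_nil]
  rw [show 5 - u.length = (5 - (u.length + 1)) + 1 by omega, pow_succ]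
  have h2 : (2 : ℝ) ^ (5 - (u.length + 1)) ≠ 0 := by positivity
  field_simp

lemma ip_rep (k : ℕ) (h : k ≤ 5) : inPrefix L10 (List.replicate k false) := by
  refine ⟨List.replicate (5 - k) false, Or.inl ?_⟩
  rw [← List.replicate_add, show k + (5 - k) = 5 by omega]
  decide

lemma ip_true : inPrefix L10 [true] :=
  ⟨List.replicate 4 false, Or.inr (by decide)⟩

lemma not_ip (k : ℕ) (hk : 1 ≤ k) :
    ¬ inPrefix L10 (List.replicate k false ++ [true]) := by
  rintro ⟨v, hv | ⟨_, hhead⟩⟩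
  · have ht : true ∈ [false, false, false, false, false] := by
      rw [← hv]; simp
    simp at ht
  · obtain ⟨k, rfl⟩ := Nat.exists_eq_add_of_le hk
    simp [List.replicate_succ, Nat.add_comm] at hhead

/-- GCD is biased in general: for the uniform distribution on `{0,1}^5` and
`L = {00000} ∪ 1·{0,1}^4`, the GCD distribution assigns `Q̃_GCD(00000) = 1/2` whereas the
grammar-aligned distribution assigns `Q(00000) = 1/17`; in particular they differ. -/
theorem stmt10 :
    QGCD 5 P10 L10 (fun _ => false) = 1 / 2 ∧
    L10.indicator P10 (List.ofFn (fun _ => false : Fin 5 → Bool)) / PL 5 P10 L10 = 1 / 17 ∧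
    QGCD 5 P10 L10 (fun _ => false) ≠
      L10.indicator P10 (List.ofFn (fun _ => false : Fin 5 → Bool)) / PL 5 P10 L10 := by
  have hofn : List.ofFn (fun _ => false : Fin 5 → Bool) = [false, false, false, false, false] := by
    decide
  have ind_pos : ∀ u : List Bool, inPrefix L10 u →
      Set.indicator {t | inPrefix L10 t} (fun _ => (1 : ℝ)) u = 1 := fun u hu =>
    Set.indicator_of_mem (show u ∈ {t | inPrefix L10 t} from hu) _
  have ind_neg : ∀ u : List Bool, ¬ inPrefix L10 u →
      Set.indicator {t | inPrefix L10 t} (fun _ => (1 : ℝ)) u = 0 := fun u hu =>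
    Set.indicator_of_notMem (show u ∉ {t | inPrefix L10 t} from hu) _
  have hQ : QGCD 5 P10 L10 (fun _ => false) = 1 / 2 := by
    have p1 := ind_pos [false] (ip_rep 1 (by norm_num))
    have p2 := ind_pos [false, false] (ip_rep 2 (by norm_num))
    have p3 := ind_pos [false, false, false] (ip_rep 3 (by norm_num))
    have p4 := ind_pos [false, false, false, false] (ip_rep 4 (by norm_num))
    have p5 := ind_pos [false, false, false, false, false] (ip_rep 5 (by norm_num))
    have pt := ind_pos [true] ip_true
    have n1 := ind_neg [false, true] (not_ip 1 le_rfl)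
    have n2 := ind_neg [false, false, true] (not_ip 2 (by norm_num))
    have n3 := ind_neg [false, false, false, true] (not_ip 3 (by norm_num))
    have n4 := ind_neg [false, false, false, false, true] (not_ip 4 (by norm_num))
    have t0 : List.take ((0 : Fin 5) : ℕ) [false, false, false, false, false] = ([] : List Bool) := rfl
    have t1 : List.take ((1 : Fin 5) : ℕ) [false, false, false, false, false] = [false] := rfl
    have t2 : List.take ((2 : Fin 5) : ℕ) [false, false, false, false, false] = [false, false] := rfl
    have t3 : List.take ((3 : Fin 5) : ℕ) [false, false, false, false, false] = [false, false, false] := rfl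
    have t4 : List.take ((4 : Fin 5) : ℕ) [false, false, false, false, false] = [false, false, false, false] := rfl
    rw [QGCD, Fin.prod_univ_five, hofn]
    have c0 := fun a => cond_eq [] a (by norm_num)
    have c1 := fun a => cond_eq [false] a (by norm_num)
    have c2 := fun a => cond_eq [false, false] a (by norm_num)
    have c3 := fun a => cond_eq [false, false, false] a (by norm_num)
    have c4 := fun a => cond_eq [false, false, false, false] a (by norm_num)
    simp only [t0, t1, t2, t3, t4, List.nil_append, List.cons_append, List.nil_append,
      Fintype.sum_bool, c0, c1, c2, c3, c4, p1, p2, p3, p4, p5, pt, n1, n2, n3, n4]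
    norm_num
  have hcard : (Finset.univ.filter (fun v : Fin 5 → Bool => List.ofFn v ∈ L10)).card = 17 := by
    decide
  have hPL : PL 5 P10 L10 = 17 / 32 := by
    rw [PL, margL]
    rw [show (∑ v : Fin (5 - List.length ([] : List Bool)) → Bool,
          L10.indicator P10 ([] ++ List.ofFn v)) =
        ∑ v : Fin 5 → Bool, (if List.ofFn v ∈ L10 then (1 : ℝ) / 32 else 0) from
      Finset.sum_congr rfl (fun v _ => by
        rw [List.nil_append, Set.indicator_apply]
        split <;> simp [P10])]
    rw [← Finset.sum_filter, Finset.sum_const, hcard]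
    norm_num
  have hnum : L10.indicator P10 (List.ofFn (fun _ => false : Fin 5 → Bool)) = 1 / 32 := by
    rw [hofn, Set.indicator_of_mem (show [false,false,false,false,false] ∈ L10 from Or.inl rfl)]
    norm_num [P10]
  refine ⟨hQ, ?_, ?_⟩
  · rw [hnum, hPL]; norm_num
  · rw [hQ, hnum, hPL]; norm_num

end GAD
end

section
/- Monotonicity of the ASAp overapproximation: if S ⊆ S' are finite subsets of L, then for every prefix w_{1:i}, c̃_{S'}(w_{1:i}) ≤ c̃_S(w_{1:i}). That is, adding samples can only tighten the overapproximation of the expected future grammaticality. -/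
open scoped BigOperators
open Finset Filter

namespace GAD

lemma marg_nonneg {α : Type*} [Fintype α] (n : ℕ) (P : List α → ℝ) (hP : ∀ w, 0 ≤ P w)
    (u : List α) : 0 ≤ marg n P u :=
  Finset.sum_nonneg fun _ _ => hP _

lemma sum_ofFn_succ {α : Type*} [Fintype α] (k : ℕ) (f : List α → ℝ) :
    ∑ v : Fin (k + 1) → α, f (List.ofFn v) = ∑ a : α, ∑ w : Fin k → α, f (a :: List.ofFn w) := by
  have h1 : ∑ p : α × (Fin k → α), f (p.1 :: List.ofFn p.2)
      = ∑ v : Fin (k + 1) → α, f (List.ofFn v) :=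
    Fintype.sum_equiv (Fin.consEquiv fun _ => α) _ _
      (by intro p; simp [Fin.consEquiv, List.ofFn_succ])
  rw [← h1, Fintype.sum_prod_type]

lemma cond_nonneg {α : Type*} [Fintype α] (n : ℕ) (P : List α → ℝ) (hP : ∀ w, 0 ≤ P w)
    (u : List α) (a : α) : 0 ≤ cond n P u a :=
  div_nonneg (marg_nonneg n P hP _) (marg_nonneg n P hP _)

lemma sum_cond {α : Type*} [Fintype α] (n : ℕ) (P : List α → ℝ)
    (hmarg : ∀ u : List α, u.length ≤ n → 0 < marg n P u)
    (u : List α) (hu : u.length < n) : ∑ a : α, cond n P u a = 1 := by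
  unfold cond
  rw [← Finset.sum_div, ← marg_succ n P u hu, div_self (hmarg u hu.le).ne']

lemma ctildeAux_le_one {α : Type*} [Fintype α] (n : ℕ) (P : List α → ℝ) (L : Set (List α))
    (hP : ∀ w, 0 ≤ P w) (hmarg : ∀ u : List α, u.length ≤ n → 0 < marg n P u)
    (S : Finset (List α)) :
    ∀ k : ℕ, ∀ u : List α, u.length + k ≤ n → ctildeAux n P L S k u ≤ 1 := by
  intro k
  induction k with
  | zero =>
    intro u _
    by_cases h : u ∈ L <;> simp [ctildeAux, Set.indicator, h]
  | succ k ih =>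
    intro u hu
    simp only [ctildeAux]
    split_ifs with h
    · calc ∑ a : α, cond n P u a * ctildeAux n P L S k (u ++ [a])
          ≤ ∑ a : α, cond n P u a * 1 := by
            refine Finset.sum_le_sum fun a _ => ?_
            exact mul_le_mul_of_nonneg_left (ih _ (by simp; omega)) (cond_nonneg n P hP u a)
      _ = 1 := by
            simp only [mul_one]
            exact sum_cond n P hmarg u (by omega)
    · by_cases h2 : u ∈ {t | inPrefix L t} <;> simp [Set.indicator, h2]

lemma ctildeAux_mono {α : Type*} [Fintype α] (n : ℕ) (P : List α → ℝ) (L : Set (List α))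
    (hP : ∀ w, 0 ≤ P w) (hmarg : ∀ u : List α, u.length ≤ n → 0 < marg n P u)
    (S S' : Finset (List α)) (hS' : ↑S' ⊆ L) (hSS' : S ⊆ S') :
    ∀ k : ℕ, ∀ u : List α, u.length + k ≤ n →
      ctildeAux n P L S' k u ≤ ctildeAux n P L S k u := by
  intro k
  induction k with
  | zero => intro u _; simp [ctildeAux]
  | succ k ih =>
    intro u hu
    simp only [ctildeAux]
    by_cases h : ∃ s ∈ S, u <+: s
    · have h' : ∃ s ∈ S', u <+: s := by
        obtain ⟨s, hs, hps⟩ := h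
        exact ⟨s, hSS' hs, hps⟩
      rw [if_pos h, if_pos h']
      refine Finset.sum_le_sum fun a _ => ?_
      exact mul_le_mul_of_nonneg_left (ih _ (by simp; omega)) (cond_nonneg n P hP u a)
    · rw [if_neg h]
      by_cases h' : ∃ s ∈ S', u <+: s
      · rw [if_pos h']
        obtain ⟨s, hs, v, hv⟩ := h'
        have hin : u ∈ {t | inPrefix L t} := ⟨v, hv ▸ hS' hs⟩
        rw [Set.indicator_of_mem hin]
        calc ∑ a : α, cond n P u a * ctildeAux n P L S' k (u ++ [a])
            ≤ ∑ a : α, cond n P u a * 1 := by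
              refine Finset.sum_le_sum fun a _ => ?_
              exact mul_le_mul_of_nonneg_left
                (ctildeAux_le_one n P L hP hmarg S' k _ (by simp; omega))
                (cond_nonneg n P hP u a)
          _ = 1 := by
              simp only [mul_one]
              exact sum_cond n P hmarg u (by omega)
      · rw [if_neg h']

/-- Monotonicity of the ASAp overapproximation: if `S ⊆ S'` then
`c̃_{S'}(u) ≤ c̃_S(u)` for every prefix `u`; adding samples only tightens the bound. -/
theorem stmt12 {α : Type*} [Fintype α] (n : ℕ) (P : List α → ℝ) (L : Set (List α))
    (hP : ∀ w, 0 ≤ P w) (hL : ∀ w ∈ L, w.length = n)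
    (hmarg : ∀ u : List α, u.length ≤ n → 0 < marg n P u)
    (S S' : Finset (List α)) (hS' : ↑S' ⊆ L) (hSS' : S ⊆ S') :
    ∀ u : List α, u.length ≤ n → ctilde n P L S' u ≤ ctilde n P L S u := by
  intro u hu
  exact ctildeAux_mono n P L hP hmarg S S' hS' hSS' (n - u.length) u (by omega)

end GAD
end
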